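/- arXiv:2003.04026 — 2 statements merged into one kernel-verified Lean document; each statement's English description precedes it below -/
import Mathlib

section
/- Let P₁, P₂ be n×n orthogonal projection matrices onto subspaces S₁, S₂ with dim S₁ = p₁ ≥ p₂ = dim S₂ ≥ 1. The eigenvalues of P₁P₂ are: 1 with multiplicity s = dim(S₁ ∩ S₂), cos²θ_{s+i} for i = 1,…,r where θ_j ∈ (0, π/2) are the nonzero non-right principal angles between S₁ and S₂, and 0 with multiplicity n − s − r. Consequently tr(P₁P₂) = s + Σ_{i=1}^r cos²(θ_{s+i}). -/
open Matrix

lemma dotProduct_sum' {n : ℕ} {ι : Type*} (s : Finset ι) (x : Fin n → ℝ) (f : ι → Fin n → ℝ) :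
    x ⬝ᵥ (∑ i ∈ s, f i) = ∑ i ∈ s, x ⬝ᵥ f i := by
  simp only [dotProduct, Finset.sum_apply, Finset.mul_sum]
  exact Finset.sum_comm

lemma sum_dotProduct' {n : ℕ} {ι : Type*} (s : Finset ι) (x : Fin n → ℝ) (f : ι → Fin n → ℝ) :
    (∑ i ∈ s, f i) ⬝ᵥ x = ∑ i ∈ s, f i ⬝ᵥ x := by
  rw [dotProduct_comm, dotProduct_sum']
  exact Finset.sum_congr rfl fun i _ => dotProduct_comm _ _

lemma dot_self_pos {n : ℕ} {z : Fin n → ℝ} (hz : z ≠ 0) : 0 < z ⬝ᵥ z := by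
  have h0 : z ⬝ᵥ z ≠ 0 := fun h => hz (dotProduct_self_eq_zero.mp h)
  have h1 : 0 ≤ z ⬝ᵥ z := Finset.sum_nonneg fun i _ => mul_self_nonneg _
  exact lt_of_le_of_ne h1 (Ne.symm h0)

lemma perturb_exists {n : ℕ} (x y z : Fin n → ℝ) (hy : y ⬝ᵥ y = 1) (hyz : y ⬝ᵥ z = 0)
    (hxz : x ⬝ᵥ z = z ⬝ᵥ z) (hz : z ≠ 0) :
    ∃ a b : ℝ, (a • y + b • z) ⬝ᵥ (a • y + b • z) = 1 ∧
      |x ⬝ᵥ y| < |x ⬝ᵥ (a • y + b • z)| := by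
  set cc := x ⬝ᵥ y with hcc
  set β := z ⬝ᵥ z with hβ
  have hβpos : 0 < β := dot_self_pos hz
  set s := Real.sqrt (cc ^ 2 + β) with hs
  have hs2 : s ^ 2 = cc ^ 2 + β := Real.sq_sqrt (by positivity)
  have hspos : 0 < s := Real.sqrt_pos.mpr (by positivity)
  refine ⟨s⁻¹ * cc, s⁻¹, ?_, ?_⟩
  · have hzy : z ⬝ᵥ y = 0 := by rw [dotProduct_comm]; exact hyz
    simp only [dotProduct_add, add_dotProduct, smul_dotProduct, dotProduct_smul,
      smul_eq_mul, hy, hyz, hzy, ← hβ]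
    field_simp
    nlinarith [hs2]
  · have hxw : x ⬝ᵥ (((s⁻¹ * cc) • y) + s⁻¹ • z) = s := by
      simp only [dotProduct_add, dotProduct_smul, smul_eq_mul, ← hcc, hxz, ← hβ]
      field_simp
      nlinarith [hs2]
    rw [hxw, abs_of_pos hspos]
    have h1 : Real.sqrt (cc ^ 2) < s := Real.sqrt_lt_sqrt (sq_nonneg cc) (by linarith)
    rwa [Real.sqrt_sq_eq_abs] at h1

lemma li_of_orthonormal {n : ℕ} {ι : Type*} [Fintype ι] (v : ι → Fin n → ℝ)
    (hnorm : ∀ k, v k ⬝ᵥ v k = 1) (horth : ∀ i k, i ≠ k → v i ⬝ᵥ v k = 0) :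
    LinearIndependent ℝ v := by
  rw [Fintype.linearIndependent_iff]
  intro g hg i
  have h := congrArg (fun w => v i ⬝ᵥ w) hg
  simp only [dotProduct_zero] at h
  rw [dotProduct_sum'] at h
  simp only [dotProduct_smul, smul_eq_mul] at h
  rwa [Finset.sum_eq_single i (fun j _ hj => by rw [horth i j (Ne.symm hj), mul_zero])
    (by simp), hnorm i, mul_one] at h

lemma span_repr_of_orthonormal {n p : ℕ} (S : Submodule ℝ (Fin n → ℝ)) (v : Fin p → Fin n → ℝ)
    (hmem : ∀ k, v k ∈ S) (hnorm : ∀ k, v k ⬝ᵥ v k = 1)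
    (horth : ∀ i k, i ≠ k → v i ⬝ᵥ v k = 0)
    (hdim : Module.finrank ℝ S = p) :
    ∀ x ∈ S, x = ∑ j, (v j ⬝ᵥ x) • v j := by
  have hli : LinearIndependent ℝ v := li_of_orthonormal v hnorm horth
  have hspan : Submodule.span ℝ (Set.range v) = S := by
    apply Submodule.eq_of_le_of_finrank_le
    · rw [Submodule.span_le]; rintro _ ⟨k, rfl⟩; exact hmem k
    · rw [hdim, finrank_span_eq_card hli, Fintype.card_fin]
  intro x hx
  set y := x - ∑ j, (v j ⬝ᵥ x) • v j with hy
  have hyv : ∀ k, v k ⬝ᵥ y = 0 := by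
    intro k
    rw [hy, dotProduct_sub, dotProduct_sum']
    simp only [dotProduct_smul, smul_eq_mul]
    rw [Finset.sum_eq_single k (fun j _ hj => by rw [horth k j (Ne.symm hj), mul_zero])
      (by simp), hnorm k, mul_one, sub_self]
  have hyS : y ∈ S := by
    apply Submodule.sub_mem _ hx
    exact Submodule.sum_mem _ fun j _ => Submodule.smul_mem _ _ (hmem j)
  rw [← hspan] at hyS
  obtain ⟨a, ha⟩ := (Submodule.mem_span_range_iff_exists_fun ℝ).mp hyS
  have hyy : y ⬝ᵥ y = 0 := by
    rw [← ha, sum_dotProduct']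
    refine Finset.sum_eq_zero fun j _ => ?_
    rw [smul_dotProduct, ha, hyv j, smul_zero]
  have h0 : y = 0 := dotProduct_self_eq_zero.mp hyy
  rw [hy, sub_eq_zero] at h0
  exact h0

/-- `IsPrincipalAngles S₁ S₂ θ` : `θ : Fin p₂ → ℝ` is the (recursively defined) system of
principal angles between the subspaces `S₁` and `S₂` of ℝⁿ, witnessed by principal
vectors `u k ∈ S₁`, `v k ∈ S₂`. -/
structure IsPrincipalAngles {n p₂ : ℕ} (S₁ S₂ : Submodule ℝ (Fin n → ℝ))
    (θ : Fin p₂ → ℝ) (u v : Fin p₂ → (Fin n → ℝ)) : Prop where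
  mem_u : ∀ k, u k ∈ S₁
  mem_v : ∀ k, v k ∈ S₂
  norm_u : ∀ k, u k ⬝ᵥ u k = 1
  norm_v : ∀ k, v k ⬝ᵥ v k = 1
  ortho_u : ∀ i k, i < k → u i ⬝ᵥ u k = 0
  ortho_v : ∀ i k, i < k → v i ⬝ᵥ v k = 0
  angle_mem : ∀ k, θ k ∈ Set.Icc (0 : ℝ) (Real.pi / 2)
  cos_eq : ∀ k, Real.cos (θ k) = |u k ⬝ᵥ v k|
  maximal : ∀ k, ∀ u' ∈ S₁, ∀ v' ∈ S₂, u' ⬝ᵥ u' = 1 → v' ⬝ᵥ v' = 1 →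
    (∀ i, i < k → u i ⬝ᵥ u' = 0 ∧ v i ⬝ᵥ v' = 0) → |u' ⬝ᵥ v'| ≤ Real.cos (θ k)

/-- Eigenstructure of the product of two orthogonal projections: the eigenvalues of `P₁P₂`
are 1 with multiplicity `s = dim (S₁ ⊓ S₂)`, the squared cosines of the principal angles
lying strictly in `(0, π/2)`, and 0 with multiplicity `n − s − r`; consequently
`tr(P₁P₂) = s + Σ cos²θ` over those angles. -/
theorem eig_product_of_projections {n p₁ p₂ : ℕ} (S₁ S₂ : Submodule ℝ (Fin n → ℝ))
    (P₁ P₂ : Matrix (Fin n) (Fin n) ℝ)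
    (hdim₁ : Module.finrank ℝ S₁ = p₁) (hdim₂ : Module.finrank ℝ S₂ = p₂)
    (hp : p₂ ≤ p₁) (hp₂ : 1 ≤ p₂)
    (h₁s : P₁.IsSymm) (h₁i : P₁ * P₁ = P₁)
    (h₂s : P₂.IsSymm) (h₂i : P₂ * P₂ = P₂)
    (h₁mem : ∀ x, P₁ *ᵥ x ∈ S₁) (h₁fix : ∀ x ∈ S₁, P₁ *ᵥ x = x)
    (h₂mem : ∀ x, P₂ *ᵥ x ∈ S₂) (h₂fix : ∀ x ∈ S₂, P₂ *ᵥ x = x)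
    (θ : Fin p₂ → ℝ) (u v : Fin p₂ → (Fin n → ℝ))
    (hθ : IsPrincipalAngles S₁ S₂ θ u v) :
    (P₁ * P₂).charpoly
        = (Polynomial.X - 1) ^ (Module.finrank ℝ ↥(S₁ ⊓ S₂))
          * (∏ j ∈ Finset.univ.filter (fun j => 0 < θ j ∧ θ j < Real.pi / 2),
              (Polynomial.X - Polynomial.C (Real.cos (θ j) ^ 2)))
          * Polynomial.X ^ (n - Module.finrank ℝ ↥(S₁ ⊓ S₂)
              - (Finset.univ.filter (fun j => 0 < θ j ∧ θ j < Real.pi / 2)).card) ∧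
    (P₁ * P₂).trace
        = (Module.finrank ℝ ↥(S₁ ⊓ S₂) : ℝ)
          + ∑ j ∈ Finset.univ.filter (fun j => 0 < θ j ∧ θ j < Real.pi / 2),
              Real.cos (θ j) ^ 2 := by
  classical
  obtain ⟨hu, hv, hnu, hnv, hou, hov, hmemθ, hcos, hmax⟩ := hθ
  set c : Fin p₂ → ℝ := fun k => u k ⬝ᵥ v k with hcdef
  have hcosk : ∀ k, Real.cos (θ k) = |c k| := hcos
  have hcsq : ∀ k, c k ^ 2 = Real.cos (θ k) ^ 2 := fun k => by rw [hcosk k, sq_abs]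
  have huo : ∀ i j : Fin p₂, i ≠ j → u i ⬝ᵥ u j = 0 := by
    intro i j hij
    rcases lt_or_gt_of_ne hij with h | h
    · exact hou i j h
    · rw [dotProduct_comm]; exact hou j i h
  have hvo : ∀ i j : Fin p₂, i ≠ j → v i ⬝ᵥ v j = 0 := by
    intro i j hij
    rcases lt_or_gt_of_ne hij with h | h
    · exact hov i j h
    · rw [dotProduct_comm]; exact hov j i h
  have hvne : ∀ j, v j ≠ 0 := by
    intro j h
    have := hnv j
    rw [h] at this; simp at this
  have hune : ∀ j, u j ≠ 0 := by
    intro j h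
    have := hnu j
    rw [h] at this; simp at this
  -- cross orthogonality of principal vectors
  have huv : ∀ i j : Fin p₂, i ≠ j → u i ⬝ᵥ v j = 0 := by
    intro i j hij
    by_contra ha
    rcases lt_or_gt_of_ne hij with hlt | hgt
    · -- perturb v at step i
      obtain ⟨a, b, hw1, hw2⟩ := perturb_exists (u i) (v i) ((u i ⬝ᵥ v j) • v j)
        (hnv i)
        (by rw [dotProduct_smul, hvo i j hij, smul_eq_mul, mul_zero])
        (by rw [dotProduct_smul, smul_dotProduct, dotProduct_smul, smul_eq_mul,
              smul_eq_mul, smul_eq_mul, hnv j, mul_one])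
        (smul_ne_zero ha (hvne j))
      set w := a • v i + b • ((u i ⬝ᵥ v j) • v j) with hwdef
      have hwS : w ∈ S₂ := Submodule.add_mem _ (Submodule.smul_mem _ _ (hv i))
        (Submodule.smul_mem _ _ (Submodule.smul_mem _ _ (hv j)))
      have hcond : ∀ l, l < i → u l ⬝ᵥ u i = 0 ∧ v l ⬝ᵥ w = 0 := by
        intro l hl
        refine ⟨hou l i hl, ?_⟩
        rw [hwdef, dotProduct_add, dotProduct_smul, dotProduct_smul, dotProduct_smul,
          hvo l i hl.ne, hvo l j (hl.trans hlt).ne]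
        simp
      have := hmax i (u i) (hu i) w hwS (hnu i) hw1 hcond
      rw [hcosk i] at this
      have hci : |c i| = |u i ⬝ᵥ v i| := rfl
      rw [hci] at this
      linarith
    · -- perturb u at step j
      obtain ⟨a, b, hw1, hw2⟩ := perturb_exists (v j) (u j) ((u i ⬝ᵥ v j) • u i)
        (hnu j)
        (by rw [dotProduct_smul, huo j i (Ne.symm hij), smul_eq_mul, mul_zero])
        (by rw [dotProduct_smul, smul_dotProduct, dotProduct_smul, smul_eq_mul,
              smul_eq_mul, smul_eq_mul, hnu i, mul_one,
              show v j ⬝ᵥ u i = u i ⬝ᵥ v j from dotProduct_comm _ _])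
        (smul_ne_zero ha (hune i))
      set w := a • u j + b • ((u i ⬝ᵥ v j) • u i) with hwdef
      have hwS : w ∈ S₁ := Submodule.add_mem _ (Submodule.smul_mem _ _ (hu j))
        (Submodule.smul_mem _ _ (Submodule.smul_mem _ _ (hu i)))
      have hcond : ∀ l, l < j → u l ⬝ᵥ w = 0 ∧ v l ⬝ᵥ v j = 0 := by
        intro l hl
        refine ⟨?_, hov l j hl⟩
        rw [hwdef, dotProduct_add, dotProduct_smul, dotProduct_smul, dotProduct_smul,
          huo l j hl.ne, huo l i (hl.trans hgt).ne]
        simp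
      have := hmax j w hwS (v j) (hv j) hw1 (hnv j) hcond
      rw [hcosk j] at this
      have hcj : |c j| = |v j ⬝ᵥ u j| := by
        rw [show v j ⬝ᵥ u j = u j ⬝ᵥ v j from dotProduct_comm _ _]
      rw [hcj, show w ⬝ᵥ v j = v j ⬝ᵥ w from dotProduct_comm _ _] at this
      linarith
  -- symmetry of projections w.r.t. dot product
  have hdot₁ : ∀ x t, x ⬝ᵥ (P₁ *ᵥ t) = (P₁ *ᵥ x) ⬝ᵥ t := by
    intro x t
    rw [dotProduct_mulVec, ← mulVec_transpose, h₁s.eq]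
  have hdot₂ : ∀ x t, x ⬝ᵥ (P₂ *ᵥ t) = (P₂ *ᵥ x) ⬝ᵥ t := by
    intro x t
    rw [dotProduct_mulVec, ← mulVec_transpose, h₂s.eq]
  -- P₁ v j = c j • u j
  have hP1v : ∀ j, P₁ *ᵥ v j = c j • u j := by
    intro j
    by_contra hne
    set w := P₁ *ᵥ v j - c j • u j with hwdef
    have hwne : w ≠ 0 := sub_ne_zero.mpr hne
    have hwS : w ∈ S₁ := Submodule.sub_mem _ (h₁mem _) (Submodule.smul_mem _ _ (hu j))
    have hwu : ∀ i, u i ⬝ᵥ w = 0 := by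
      intro i
      rw [hwdef, dotProduct_sub, dotProduct_smul, hdot₁, h₁fix _ (hu i)]
      rcases eq_or_ne i j with rfl | hij
      · rw [hnu i, smul_eq_mul, mul_one]; exact sub_self _
      · rw [huv i j hij, huo i j hij, smul_eq_mul, mul_zero, sub_self]
    have hwv : v j ⬝ᵥ w = w ⬝ᵥ w := by
      have h1 : w ⬝ᵥ w = w ⬝ᵥ v j := by
        have h2 : w ⬝ᵥ (P₁ *ᵥ v j - c j • u j) = w ⬝ᵥ (P₁ *ᵥ v j) - w ⬝ᵥ (c j • u j) := by
          rw [dotProduct_sub]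
        rw [← hwdef] at h2
        rw [h2, dotProduct_smul, show w ⬝ᵥ u j = 0 from by rw [dotProduct_comm]; exact hwu j,
          smul_eq_mul, mul_zero, sub_zero, hdot₁, h₁fix _ hwS]
      rw [h1, dotProduct_comm]
    obtain ⟨a, b, hw1, hw2⟩ := perturb_exists (v j) (u j) w (hnu j) (hwu j) hwv hwne
    set w' := a • u j + b • w with hw'def
    have hw'S : w' ∈ S₁ := Submodule.add_mem _ (Submodule.smul_mem _ _ (hu j))
      (Submodule.smul_mem _ _ hwS)
    have hcond : ∀ l, l < j → u l ⬝ᵥ w' = 0 ∧ v l ⬝ᵥ v j = 0 := by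
      intro l hl
      refine ⟨?_, hov l j hl⟩
      rw [hw'def, dotProduct_add, dotProduct_smul, dotProduct_smul, huo l j hl.ne, hwu l]
      simp
    have := hmax j w' hw'S (v j) (hv j) hw1 (hnv j) hcond
    rw [hcosk j,
      show w' ⬝ᵥ v j = v j ⬝ᵥ w' from dotProduct_comm _ _,
      show |c j| = |v j ⬝ᵥ u j| from by rw [show v j ⬝ᵥ u j = u j ⬝ᵥ v j from dotProduct_comm _ _]] at this
    linarith
  -- P₂ action
  have hP2x : ∀ x, P₂ *ᵥ x = ∑ j, (v j ⬝ᵥ x) • v j := by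
    intro x
    have h2 := span_repr_of_orthonormal S₂ v hv hnv hvo hdim₂ _ (h₂mem x)
    rw [h2]
    exact Finset.sum_congr rfl fun j _ => by rw [hdot₂, h₂fix _ (hv j)]
  -- action of the product
  have hMx : ∀ x, (P₁ * P₂) *ᵥ x = ∑ j, (c j * (v j ⬝ᵥ x)) • u j := by
    intro x
    rw [← mulVec_mulVec, hP2x]
    have : P₁ *ᵥ (∑ j, (v j ⬝ᵥ x) • v j) = ∑ j, (v j ⬝ᵥ x) • (P₁ *ᵥ v j) := by
      rw [show ∀ y, P₁ *ᵥ y = P₁.mulVecLin y from fun _ => rfl, map_sum]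
      exact Finset.sum_congr rfl fun j _ => by rw [_root_.map_smul, Matrix.mulVecLin_apply]
    rw [this]
    exact Finset.sum_congr rfl fun j _ => by rw [hP1v j, smul_smul, mul_comm]
  set Z : Finset (Fin p₂) := Finset.univ.filter (fun k => θ k = 0) with hZdef
  have hc1 : ∀ k, θ k = 0 → c k ^ 2 = 1 := fun k h => by
    rw [hcsq, h, Real.cos_zero, one_pow]
  have huZ : ∀ k, θ k = 0 → u k = c k • v k := by
    intro k h
    have hd : (u k - c k • v k) ⬝ᵥ (u k - c k • v k) = 0 := by
      rw [dotProduct_sub, sub_dotProduct, sub_dotProduct, dotProduct_smul, dotProduct_smul,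
        smul_dotProduct, smul_dotProduct, hnu k, hnv k,
        show v k ⬝ᵥ u k = c k from by rw [dotProduct_comm]]
      have := hc1 k h
      simp only [smul_eq_mul]
      nlinarith
    have := dotProduct_self_eq_zero.mp hd
    rwa [sub_eq_zero] at this
  have hvZ : ∀ k, θ k = 0 → v k = c k • u k := by
    intro k h
    rw [huZ k h, smul_smul, show c k * c k = c k ^ 2 from (sq (c k)).symm, hc1 k h, one_smul]
  have huZS : ∀ k, θ k = 0 → u k ∈ S₁ ⊓ S₂ := fun k h =>
    ⟨hu k, by rw [huZ k h]; exact Submodule.smul_mem _ _ (hv k)⟩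
  -- the zero-angle principal vectors form a basis of S₁ ⊓ S₂
  have hsZ : Module.finrank ℝ ↥(S₁ ⊓ S₂) = Z.card := by
    set fz : {k // k ∈ Z} → (Fin n → ℝ) := fun k => u k with hfzdef
    have hZmem : ∀ k : {k // k ∈ Z}, θ k.1 = 0 := fun k => (Finset.mem_filter.mp k.2).2
    have hzli : LinearIndependent ℝ fz :=
      li_of_orthonormal fz (fun k => hnu k.1)
        (fun i k h => huo i.1 k.1 (fun hh => h (Subtype.ext hh)))
    have hle : Submodule.span ℝ (Set.range fz) ≤ S₁ ⊓ S₂ := by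
      rw [Submodule.span_le]; rintro _ ⟨k, rfl⟩; exact huZS k.1 (hZmem k)
    have hge : S₁ ⊓ S₂ ≤ Submodule.span ℝ (Set.range fz) := by
      intro x hx
      set y := x - ∑ k : {k // k ∈ Z}, (u k.1 ⬝ᵥ x) • u k.1 with hydef
      have hyS : y ∈ S₁ ⊓ S₂ := by
        apply Submodule.sub_mem _ hx
        exact Submodule.sum_mem _ fun k _ => Submodule.smul_mem _ _ (huZS k.1 (hZmem k))
      have hyu : ∀ k : {k // k ∈ Z}, u k.1 ⬝ᵥ y = 0 := by
        intro k
        rw [hydef, dotProduct_sub, dotProduct_sum']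
        simp only [dotProduct_smul, smul_eq_mul]
        rw [Finset.sum_eq_single k (fun j _ hj => by
            rw [huo k.1 j.1 (fun hh => hj (Subtype.ext hh.symm)), mul_zero])
          (by simp), hnu k.1, mul_one, sub_self]
      have hyv : ∀ k : {k // k ∈ Z}, v k.1 ⬝ᵥ y = 0 := by
        intro k
        rw [hvZ k.1 (hZmem k), smul_dotProduct, hyu k, smul_zero]
      have hy0 : y = 0 := by
        by_contra hyne
        have hβ : 0 < y ⬝ᵥ y := dot_self_pos hyne
        by_cases hall : ∀ k, θ k = 0
        · -- then y ∈ S₂ is orthogonal to all v k, hence 0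
          have : y = ∑ j, (v j ⬝ᵥ y) • v j :=
            span_repr_of_orthonormal S₂ v hv hnv hvo hdim₂ _ hyS.2
          rw [Finset.sum_eq_zero (fun j _ => by
            rw [hyv ⟨j, Finset.mem_filter.mpr ⟨Finset.mem_univ _, hall j⟩⟩, zero_smul])] at this
          exact hyne this
        · push_neg at hall
          have hFne : (Finset.univ.filter (fun k => θ k ≠ 0)).Nonempty := by
            obtain ⟨k, hk⟩ := hall
            exact ⟨k, Finset.mem_filter.mpr ⟨Finset.mem_univ _, hk⟩⟩
          set k₀ := (Finset.univ.filter (fun k => θ k ≠ 0)).min' hFne with hk₀def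
          have hk₀ : θ k₀ ≠ 0 :=
            (Finset.mem_filter.mp ((Finset.univ.filter (fun k => θ k ≠ 0)).min'_mem hFne)).2
          have hlt : ∀ i, i < k₀ → θ i = 0 := by
            intro i hi
            by_contra hne'
            exact absurd (Finset.min'_le _ i (Finset.mem_filter.mpr ⟨Finset.mem_univ _, hne'⟩))
              (not_le.mpr hi)
          set x' := (Real.sqrt (y ⬝ᵥ y))⁻¹ • y with hx'def
          have hsq : Real.sqrt (y ⬝ᵥ y) ^ 2 = y ⬝ᵥ y := Real.sq_sqrt hβ.le
          have hspos : 0 < Real.sqrt (y ⬝ᵥ y) := Real.sqrt_pos.mpr hβ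
          have hx'unit : x' ⬝ᵥ x' = 1 := by
            rw [hx'def, dotProduct_smul, smul_dotProduct, smul_eq_mul, smul_eq_mul]
            field_simp
            rw [hsq]
          have hcond : ∀ i, i < k₀ → u i ⬝ᵥ x' = 0 ∧ v i ⬝ᵥ x' = 0 := by
            intro i hi
            have hiZ : i ∈ Z := Finset.mem_filter.mpr ⟨Finset.mem_univ _, hlt i hi⟩
            constructor
            · rw [hx'def, dotProduct_smul, hyu ⟨i, hiZ⟩, smul_zero]
            · rw [hx'def, dotProduct_smul, hyv ⟨i, hiZ⟩, smul_zero]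
          have hm := hmax k₀ x' (Submodule.smul_mem _ _ hyS.1) x'
            (Submodule.smul_mem _ _ hyS.2) hx'unit hx'unit hcond
          rw [hx'unit, abs_one] at hm
          have hθpos : 0 < θ k₀ := lt_of_le_of_ne (hmemθ k₀).1 (Ne.symm hk₀)
          have : Real.cos (θ k₀) < 1 := by
            have h1 := Real.cos_lt_cos_of_nonneg_of_le_pi (le_refl 0)
              (le_trans (hmemθ k₀).2 (by linarith [Real.pi_pos])) hθpos
            rwa [Real.cos_zero] at h1
          linarith
      have hxy : x = ∑ k : {k // k ∈ Z}, (u k.1 ⬝ᵥ x) • u k.1 := by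
        have h' := hy0
        rw [hydef, sub_eq_zero] at h'
        exact h'
      rw [hxy]
      exact Submodule.sum_mem _ fun k _ =>
        Submodule.smul_mem _ _ (Submodule.subset_span ⟨k, rfl⟩)
    have heq : S₁ ⊓ S₂ = Submodule.span ℝ (Set.range fz) := le_antisymm hge hle
    rw [heq, finrank_span_eq_card hzli, Fintype.card_coe]
  set T : Finset (Fin p₂) := Finset.univ.filter (fun j => 0 < θ j ∧ θ j < Real.pi / 2) with hTdef
  set K : Finset (Fin p₂) := Finset.univ.filter (fun k => c k ≠ 0) with hKdef
  have hcK : ∀ k, c k ≠ 0 ↔ θ k < Real.pi / 2 := by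
    intro k
    constructor
    · intro h
      rcases lt_or_eq_of_le (hmemθ k).2 with h' | h'
      · exact h'
      · exfalso
        apply h
        have : Real.cos (θ k) = 0 := by rw [h', Real.cos_pi_div_two]
        rw [hcosk k] at this
        exact abs_eq_zero.mp this
    · intro h
      have hpos : 0 < Real.cos (θ k) := Real.cos_pos_of_mem_Ioo
        ⟨by linarith [(hmemθ k).1, Real.pi_pos], h⟩
      rw [hcosk k] at hpos
      intro h0
      rw [h0, abs_zero] at hpos
      exact lt_irrefl 0 hpos
  have hZT : Disjoint Z T := by
    rw [Finset.disjoint_left]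
    intro k hkZ hkT
    have h1 := (Finset.mem_filter.mp hkZ).2
    have h2 := (Finset.mem_filter.mp hkT).2
    rw [h1] at h2
    exact lt_irrefl 0 h2.1
  have hKZT : K = Z ∪ T := by
    ext k
    simp only [hKdef, hZdef, hTdef, Finset.mem_filter, Finset.mem_union, Finset.mem_univ,
      true_and]
    rw [hcK k]
    constructor
    · intro h
      rcases eq_or_lt_of_le (hmemθ k).1 with h' | h'
      · exact Or.inl h'.symm
      · exact Or.inr ⟨h', h⟩
    · rintro (h | h)
      · rw [h]; linarith [Real.pi_pos]
      · exact h.2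
  have hKcard : K.card = Z.card + T.card := by
    rw [hKZT, Finset.card_union_of_disjoint hZT]
  -- the kernel of the "coordinates along the v's in K" map
  set L : (Fin n → ℝ) →ₗ[ℝ] ({k // k ∈ K} → ℝ) :=
    Matrix.mulVecLin (Matrix.of fun (k : {k // k ∈ K}) i => v k.1 i) with hLdef
  have hLapp : ∀ x (k : {k // k ∈ K}), L x k = v k.1 ⬝ᵥ x := fun x k => rfl
  have hLsurj : Function.Surjective L := by
    intro g
    refine ⟨∑ k : {k // k ∈ K}, g k • v k.1, ?_⟩
    funext k'
    rw [hLapp, dotProduct_sum']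
    simp only [dotProduct_smul, smul_eq_mul]
    rw [Finset.sum_eq_single k' (fun j _ hj => by
        rw [hvo k'.1 j.1 (fun hh => hj (Subtype.ext hh.symm)), mul_zero])
      (by simp), hnv k'.1, mul_one]
  have hWrank : K.card + Module.finrank ℝ (LinearMap.ker L) = n := by
    have h1 := LinearMap.finrank_range_add_finrank_ker L
    rw [LinearMap.range_eq_top.mpr hLsurj, finrank_top, Module.finrank_fintype_fun_eq_card,
      Fintype.card_coe, Module.finrank_fin_fun] at h1
    exact h1
  set m := Module.finrank ℝ (LinearMap.ker L) with hmdef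
  set bW := Module.finBasis ℝ (LinearMap.ker L) with hbWdef
  set b : ({k // k ∈ K} ⊕ Fin m) → (Fin n → ℝ) :=
    Sum.elim (fun k => u k.1) (fun i => ((bW i : LinearMap.ker L) : Fin n → ℝ)) with hbdef
  have hvker : ∀ (k : {k // k ∈ K}) (w : LinearMap.ker L), v k.1 ⬝ᵥ (w : Fin n → ℝ) = 0 := by
    intro k w
    have := w.2
    rw [LinearMap.mem_ker] at this
    have := congrFun this k
    rw [← hLapp]
    exact this
  have hbli : LinearIndependent ℝ b := by
    rw [Fintype.linearIndependent_iff]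
    intro g hg
    rw [Fintype.sum_sum_type] at hg
    simp only [hbdef, Sum.elim_inl, Sum.elim_inr] at hg
    have h1 : ∀ k : {k // k ∈ K}, g (Sum.inl k) = 0 := by
      intro k
      have h := congrArg (fun t => v k.1 ⬝ᵥ t) hg
      simp only [dotProduct_add, dotProduct_zero] at h
      rw [dotProduct_sum', dotProduct_sum'] at h
      simp only [dotProduct_smul, smul_eq_mul] at h
      rw [Finset.sum_eq_single k (fun j _ hj => by
          rw [show v k.1 ⬝ᵥ u j.1 = u j.1 ⬝ᵥ v k.1 from dotProduct_comm _ _,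
            huv j.1 k.1 (fun hh => hj (Subtype.ext hh)), mul_zero]) (by simp)] at h
      rw [Finset.sum_eq_zero (fun i _ => by rw [hvker k (bW i), mul_zero]), add_zero] at h
      have hck : c k.1 ≠ 0 := (Finset.mem_filter.mp k.2).2
      have : v k.1 ⬝ᵥ u k.1 = c k.1 := by rw [dotProduct_comm]
      rw [this] at h
      exact (mul_eq_zero.mp h).resolve_right hck
    have hg2 : ∑ i : Fin m, g (Sum.inr i) • ((bW i : LinearMap.ker L) : Fin n → ℝ) = 0 := by
      rw [Finset.sum_eq_zero (fun k _ => by rw [h1 k, zero_smul]), zero_add] at hg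
      exact hg
    have h3 : ∀ i : Fin m, g (Sum.inr i) = 0 := by
      have hsum : ((∑ i : Fin m, g (Sum.inr i) • bW i : LinearMap.ker L) : Fin n → ℝ) = 0 := by
        push_cast
        exact hg2
      have hzero : (∑ i : Fin m, g (Sum.inr i) • bW i : LinearMap.ker L) = 0 :=
        Subtype.ext hsum
      exact Fintype.linearIndependent_iff.mp bW.linearIndependent _ hzero
    rintro (k | i)
    · exact h1 k
    · exact h3 i
  have hnpos : 1 ≤ n := by
    have h1 := Submodule.finrank_le S₂
    rw [hdim₂, Module.finrank_fin_fun] at h1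
    omega
  have hcardι : Fintype.card ({k // k ∈ K} ⊕ Fin m) = Module.finrank ℝ (Fin n → ℝ) := by
    rw [Fintype.card_sum, Fintype.card_coe, Fintype.card_fin, Module.finrank_fin_fun]
    exact hWrank
  haveI hne : Nonempty ({k // k ∈ K} ⊕ Fin m) := by
    apply Fintype.card_pos_iff.mp
    rw [hcardι, Module.finrank_fin_fun]
    omega
  set B := basisOfLinearIndependentOfCardEqFinrank hbli hcardι with hBdef
  have hB : ⇑B = b := coe_basisOfLinearIndependentOfCardEqFinrank _ _
  set f := Matrix.toLin' (P₁ * P₂) with hfdef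
  set dd : ({k // k ∈ K} ⊕ Fin m) → ℝ := Sum.elim (fun k => c k.1 ^ 2) (fun _ => 0) with hdddef
  have hfb : ∀ i, f (b i) = dd i • b i := by
    rintro (k | i)
    · simp only [hbdef, hdddef, Sum.elim_inl]
      rw [hfdef, Matrix.toLin'_apply, hMx]
      rw [Finset.sum_eq_single k.1 (fun j _ hj => by
          rw [show v j ⬝ᵥ u k.1 = u k.1 ⬝ᵥ v j from dotProduct_comm _ _,
            huv k.1 j (Ne.symm hj), mul_zero, zero_smul]) (by simp)]
      rw [show v k.1 ⬝ᵥ u k.1 = c k.1 from dotProduct_comm _ _, ← sq]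
    · simp only [hbdef, hdddef, Sum.elim_inr]
      rw [hfdef, Matrix.toLin'_apply, hMx, zero_smul]
      refine Finset.sum_eq_zero fun j _ => ?_
      by_cases hcj : c j = 0
      · rw [hcj, zero_mul, zero_smul]
      · rw [hvker ⟨j, Finset.mem_filter.mpr ⟨Finset.mem_univ _, hcj⟩⟩ (bW i), mul_zero,
          zero_smul]
  have hmat : LinearMap.toMatrix B B f = Matrix.diagonal dd := by
    ext i j
    rw [LinearMap.toMatrix_apply]
    have : f (B j) = dd j • B j := by rw [hB]; exact hfb j
    rw [this, _root_.map_smul, Module.Basis.repr_self]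
    rw [Finsupp.smul_apply, Finsupp.single_apply]
    by_cases h : i = j
    · subst h; rw [Matrix.diagonal_apply_eq]; simp
    · rw [Matrix.diagonal_apply_ne _ h, if_neg (Ne.symm h)]; simp
  have hcp : (P₁ * P₂).charpoly
      = ∏ i : ({k // k ∈ K} ⊕ Fin m), (Polynomial.X - Polynomial.C (dd i)) := by
    have e1 : LinearMap.toMatrix (Pi.basisFun ℝ (Fin n)) (Pi.basisFun ℝ (Fin n)) f
        = P₁ * P₂ := by
      rw [LinearMap.toMatrix_eq_toMatrix', hfdef]
      exact LinearMap.toMatrix'_toLin' _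
    have e2 : (P₁ * P₂).charpoly = f.charpoly := by
      rw [← e1, LinearMap.charpoly_toMatrix]
    have e3 : f.charpoly = (Matrix.diagonal dd).charpoly := by
      rw [← hmat, LinearMap.charpoly_toMatrix]
    have e4 : Matrix.charmatrix (Matrix.diagonal dd)
        = Matrix.diagonal (fun i => Polynomial.X - Polynomial.C (dd i)) := by
      ext i j
      by_cases h : i = j
      · subst h
        rw [Matrix.charmatrix_apply_eq, Matrix.diagonal_apply_eq, Matrix.diagonal_apply_eq]
      · rw [Matrix.charmatrix_apply_ne _ _ _ h, Matrix.diagonal_apply_ne _ h,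
          Matrix.diagonal_apply_ne _ h]
        simp
    rw [e2, e3, Matrix.charpoly, e4, Matrix.det_diagonal]
  constructor
  · -- characteristic polynomial
    rw [hcp, hsZ, Fintype.prod_sum_type]
    simp only [hdddef, Sum.elim_inl, Sum.elim_inr]
    rw [show (∏ _i : Fin m, (Polynomial.X - Polynomial.C (0:ℝ))) = Polynomial.X ^ m from by
      rw [Finset.prod_const, map_zero, sub_zero, Finset.card_univ, Fintype.card_fin]]
    rw [Finset.prod_coe_sort K (fun k => Polynomial.X - Polynomial.C (c k ^ 2))]
    rw [hKZT, Finset.prod_union hZT]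
    rw [show (∏ k ∈ Z, (Polynomial.X - Polynomial.C (c k ^ 2)))
        = (Polynomial.X - 1) ^ Z.card from by
      rw [Finset.prod_congr rfl (fun k hk => by
        rw [hc1 k (Finset.mem_filter.mp hk).2, Polynomial.C_1]), Finset.prod_const]]
    rw [show (∏ k ∈ T, (Polynomial.X - Polynomial.C (c k ^ 2)))
        = ∏ k ∈ T, (Polynomial.X - Polynomial.C (Real.cos (θ k) ^ 2)) from
      Finset.prod_congr rfl (fun k _ => by rw [hcsq])]
    rw [show n - Z.card - T.card = m from by omega]
  · -- trace
    have hdiag : ∀ i, (P₁ * P₂) i i = ∑ k, (c k * v k i) * u k i := by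
      intro i
      have h1 : (P₁ * P₂) *ᵥ Pi.single i 1 = fun i' => (P₁ * P₂) i' i * 1 :=
        Matrix.mulVec_single _ _ _
      rw [hMx] at h1
      have h2 := congrFun h1.symm i
      simp only [Finset.sum_apply, Pi.smul_apply, smul_eq_mul, mul_one] at h2
      rw [h2]
      refine Finset.sum_congr rfl fun k _ => ?_
      rw [dotProduct_single, mul_one]
    have htr : (P₁ * P₂).trace = ∑ k, c k ^ 2 := by
      rw [Matrix.trace]
      have : ∀ i, (P₁ * P₂).diag i = (P₁ * P₂) i i := fun i => rfl
      calc ∑ i, (P₁ * P₂).diag i = ∑ i, ∑ k, (c k * v k i) * u k i := by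
            exact Finset.sum_congr rfl fun i _ => by rw [this, hdiag]
        _ = ∑ k, ∑ i, (c k * v k i) * u k i := Finset.sum_comm
        _ = ∑ k, c k * (v k ⬝ᵥ u k) := by
            refine Finset.sum_congr rfl fun k _ => ?_
            rw [dotProduct, Finset.mul_sum]
            exact Finset.sum_congr rfl fun i _ => by ring
        _ = ∑ k, c k ^ 2 := by
            refine Finset.sum_congr rfl fun k _ => ?_
            rw [show v k ⬝ᵥ u k = c k from dotProduct_comm _ _, sq]
    rw [htr, hsZ]
    have hsplit := Finset.sum_filter_add_sum_filter_not Finset.univ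
      (fun k => c k ≠ 0) (fun k => c k ^ 2)
    rw [← hKdef] at hsplit
    rw [← hsplit]
    have h0 : (∑ k ∈ Finset.univ.filter (fun k => ¬ c k ≠ 0), c k ^ 2) = 0 := by
      refine Finset.sum_eq_zero fun k hk => ?_
      have := (Finset.mem_filter.mp hk).2
      rw [not_not] at this
      rw [this]; ring
    rw [h0, add_zero, hKZT, Finset.sum_union hZT]
    rw [show (∑ k ∈ Z, c k ^ 2) = (Z.card : ℝ) from by
      rw [Finset.sum_congr rfl (fun k hk => hc1 k (Finset.mem_filter.mp hk).2),
        Finset.sum_const, nsmul_eq_mul, mul_one]]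
    rw [show (∑ k ∈ T, c k ^ 2) = ∑ k ∈ T, Real.cos (θ k) ^ 2 from
      Finset.sum_congr rfl fun k _ => hcsq k]
end

section
/- Under y ~ N(μ*, σ*²I_n) and equal known variances σ₁ = σ₂ = σ, the expected log Bayes factor for the two Gaussian linear models with shrinkage smoothers H_i = κP_i equals (KL₂ − KL₁)/(2 − κ) + ((p₁ − p₂)/2)·(log(1−κ) + κσ*²/σ²), where KL_i = KL(N(μ*, σ*²I_n) ‖ N(H_iμ*, σ²I_n)). -/
open MeasureTheory Matrix Real

/-- Density of the multivariate normal distribution `N(μ, S)`. -/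
noncomputable def gaussianPDF {ι : Type*} [Fintype ι] [DecidableEq ι] (μ : ι → ℝ)
    (S : Matrix ι ι ℝ) (y : ι → ℝ) : ℝ :=
  (Real.sqrt ((2 * Real.pi) ^ (Fintype.card ι) * S.det))⁻¹ *
    Real.exp (-(1/2 : ℝ) * ((y - μ) ⬝ᵥ (S⁻¹ *ᵥ (y - μ))))

/-- Expectation of `f(y)` for `y ~ N(μ, S)`. -/
noncomputable def gExp {ι : Type*} [Fintype ι] [DecidableEq ι] (μ : ι → ℝ)
    (S : Matrix ι ι ℝ) (f : (ι → ℝ) → ℝ) : ℝ :=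
  ∫ y : ι → ℝ, f y * gaussianPDF μ S y


/-- Kullback–Leibler divergence KL(N(μ₁,S₁) ‖ N(μ₂,S₂)) between multivariate normals. -/
noncomputable def klGaussian {ι : Type*} [Fintype ι] [DecidableEq ι] (μ₁ : ι → ℝ)
    (S₁ : Matrix ι ι ℝ) (μ₂ : ι → ℝ) (S₂ : Matrix ι ι ℝ) : ℝ :=
  ∫ y : ι → ℝ, Real.log (gaussianPDF μ₁ S₁ y / gaussianPDF μ₂ S₂ y) * gaussianPDF μ₁ S₁ y

open Real Filter Set

lemma integral_mul_exp_neg_mul_sq {b : ℝ} (hb : 0 < b) :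
    ∫ x : ℝ, x * Real.exp (-b * x ^ 2) = 0 := by
  have h := integral_neg_eq_self (fun x : ℝ => x * Real.exp (-b * x ^ 2)) volume
  simp only [neg_mul, neg_sq, neg_neg] at h
  have h2 : ∫ x : ℝ, -(x * Real.exp (-b * x ^ 2)) = -∫ x : ℝ, x * Real.exp (-b * x ^ 2) :=
    integral_neg _
  simp only [neg_mul] at h2
  rw [h2] at h
  simp only [neg_mul]
  linarith

lemma integrable_sq_mul_exp_neg_mul_sq {b : ℝ} (hb : 0 < b) :
    Integrable (fun x : ℝ => x ^ 2 * Real.exp (-b * x ^ 2)) := by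
  have := integrable_rpow_mul_exp_neg_mul_sq hb (s := 2) (by norm_num)
  simpa [Real.rpow_natCast] using this

lemma tendsto_mul_exp_neg_mul_sq_atTop {b : ℝ} (hb : 0 < b) :
    Tendsto (fun x : ℝ => x * Real.exp (-b * x ^ 2)) atTop (nhds 0) := by
  have h := rpow_mul_exp_neg_mul_sq_isLittleO_exp_neg hb (1 : ℝ)
  have h2 : Tendsto (fun x : ℝ => Real.exp (-(1/2) * x)) atTop (nhds 0) := by
    apply Real.tendsto_exp_atBot.comp
    exact Tendsto.neg_mul_atTop (by norm_num : (-(1/2):ℝ) < 0) tendsto_const_nhds tendsto_id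
  have h3 := h.isBigO.trans_tendsto h2
  refine h3.congr' ?_
  filter_upwards [eventually_gt_atTop (0:ℝ)] with x hx
  rw [Real.rpow_one]

lemma tendsto_mul_exp_neg_mul_sq_atBot {b : ℝ} (hb : 0 < b) :
    Tendsto (fun x : ℝ => x * Real.exp (-b * x ^ 2)) atBot (nhds 0) := by
  have h := (tendsto_mul_exp_neg_mul_sq_atTop hb).comp tendsto_neg_atBot_atTop
  have : (fun x : ℝ => -x * Real.exp (-b * (-x) ^ 2)) = fun x : ℝ => -(x * Real.exp (-b * x ^ 2)) := by
    funext x; ring_nf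
  simp only [Function.comp_def] at h
  rw [this] at h
  simpa using h.neg

lemma integral_sq_mul_exp_neg_mul_sq {b : ℝ} (hb : 0 < b) :
    ∫ x : ℝ, x ^ 2 * Real.exp (-b * x ^ 2) = Real.sqrt (π / b) / (2 * b) := by
  set F : ℝ → ℝ := fun x => x * Real.exp (-b * x ^ 2) with hF
  have hderiv : ∀ x : ℝ, HasDerivAt F (Real.exp (-b * x ^ 2) - 2 * b * (x ^ 2 * Real.exp (-b * x ^ 2))) x := by
    intro x
    have h1 : HasDerivAt (fun x : ℝ => -b * x ^ 2) (-b * (2 * x)) x := by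
      simpa using ((hasDerivAt_pow 2 x).const_mul (-b))
    have h2 : HasDerivAt (fun x : ℝ => Real.exp (-b * x ^ 2)) (Real.exp (-b * x ^ 2) * (-b * (2 * x))) x := h1.exp
    have : HasDerivAt F
        (1 * Real.exp (-b * x ^ 2) + id x * (Real.exp (-b * x ^ 2) * (-b * (2 * x)))) x :=
      (hasDerivAt_id x).mul h2
    convert this using 1
    simp only [id_eq]
    ring
  have hint : Integrable (fun x : ℝ => Real.exp (-b * x ^ 2) - 2 * b * (x ^ 2 * Real.exp (-b * x ^ 2))) :=
    (integrable_exp_neg_mul_sq hb).sub ((integrable_sq_mul_exp_neg_mul_sq hb).const_mul _)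
  have hIoi : ∫ x in Ioi (0:ℝ), (Real.exp (-b * x ^ 2) - 2 * b * (x ^ 2 * Real.exp (-b * x ^ 2))) = 0 - F 0 :=
    integral_Ioi_of_hasDerivAt_of_tendsto' (fun x _ => hderiv x) hint.integrableOn
      (tendsto_mul_exp_neg_mul_sq_atTop hb)
  have hIic : ∫ x in Iic (0:ℝ), (Real.exp (-b * x ^ 2) - 2 * b * (x ^ 2 * Real.exp (-b * x ^ 2))) = F 0 - 0 :=
    integral_Iic_of_hasDerivAt_of_tendsto' (fun x _ => hderiv x) hint.integrableOn
      (tendsto_mul_exp_neg_mul_sq_atBot hb)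
  have htot : ∫ x : ℝ, (Real.exp (-b * x ^ 2) - 2 * b * (x ^ 2 * Real.exp (-b * x ^ 2))) = 0 := by
    rw [← integral_add_compl (measurableSet_Iic (a := (0:ℝ))) hint, compl_Iic, hIic, hIoi]
    ring
  have hsub : ∫ x : ℝ, (Real.exp (-b * x ^ 2) - 2 * b * (x ^ 2 * Real.exp (-b * x ^ 2)))
      = (∫ x : ℝ, Real.exp (-b * x ^ 2)) - 2 * b * ∫ x : ℝ, x ^ 2 * Real.exp (-b * x ^ 2) := by
    rw [integral_sub (integrable_exp_neg_mul_sq hb) ((integrable_sq_mul_exp_neg_mul_sq hb).const_mul _),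
      integral_const_mul]
  rw [hsub, integral_gaussian] at htot
  have hb' : (2 : ℝ) * b ≠ 0 := by positivity
  field_simp at htot ⊢
  linarith

noncomputable def g1d (m s x : ℝ) : ℝ :=
  (Real.sqrt (2 * π * s))⁻¹ * Real.exp (-(1/2) * s⁻¹ * (x - m) ^ 2)

variable {m s : ℝ}

lemma g1d_eq (m s : ℝ) : g1d m s = fun x =>
    (Real.sqrt (2 * π * s))⁻¹ * Real.exp (-((1/2) * s⁻¹) * (x - m) ^ 2) := by
  funext x; simp [g1d, neg_mul]

lemma half_inv_pos (hs : 0 < s) : 0 < (1/2) * s⁻¹ := by positivity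

lemma sqrt_two_pi_s_pos (hs : 0 < s) : 0 < Real.sqrt (2 * π * s) :=
  Real.sqrt_pos.mpr (by positivity)

lemma integral_exp_base (hs : 0 < s) :
    ∫ x : ℝ, Real.exp (-((1/2) * s⁻¹) * x ^ 2) = Real.sqrt (2 * π * s) := by
  rw [integral_gaussian]
  congr 1
  field_simp

lemma integrable_g1d (hs : 0 < s) : Integrable (g1d m s) := by
  rw [g1d_eq]
  exact (((integrable_exp_neg_mul_sq (half_inv_pos hs)).comp_sub_right m).const_mul _)

lemma integral_g1d (hs : 0 < s) : ∫ x : ℝ, g1d m s x = 1 := by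
  rw [g1d_eq]
  simp only []
  rw [integral_const_mul, integral_sub_right_eq_self (fun x => Real.exp (-((1/2) * s⁻¹) * x ^ 2)) m,
    integral_exp_base hs]
  exact inv_mul_cancel₀ (sqrt_two_pi_s_pos hs).ne'

lemma integrable_id_mul_g1d (hs : 0 < s) : Integrable (fun x => x * g1d m s x) := by
  rw [g1d_eq]
  have : (fun x : ℝ => x * ((Real.sqrt (2 * π * s))⁻¹ * Real.exp (-((1/2) * s⁻¹) * (x - m) ^ 2)))
      = fun x : ℝ => (Real.sqrt (2 * π * s))⁻¹ * (((x - m) * Real.exp (-((1/2) * s⁻¹) * (x - m) ^ 2))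
          + m * Real.exp (-((1/2) * s⁻¹) * (x - m) ^ 2)) := by
    funext x; ring
  rw [this]
  exact ((((integrable_mul_exp_neg_mul_sq (half_inv_pos hs)).comp_sub_right m)).add
    (((integrable_exp_neg_mul_sq (half_inv_pos hs)).comp_sub_right m).const_mul m)).const_mul _

lemma integral_id_mul_g1d (hs : 0 < s) : ∫ x : ℝ, x * g1d m s x = m := by
  rw [g1d_eq]
  have : (fun x : ℝ => x * ((Real.sqrt (2 * π * s))⁻¹ * Real.exp (-((1/2) * s⁻¹) * (x - m) ^ 2)))
      = fun x : ℝ => (Real.sqrt (2 * π * s))⁻¹ * (((x - m) * Real.exp (-((1/2) * s⁻¹) * (x - m) ^ 2))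
          + m * Real.exp (-((1/2) * s⁻¹) * (x - m) ^ 2)) := by
    funext x; ring
  rw [this, integral_const_mul,
    integral_add ((integrable_mul_exp_neg_mul_sq (half_inv_pos hs)).comp_sub_right m)
      (((integrable_exp_neg_mul_sq (half_inv_pos hs)).comp_sub_right m).const_mul m),
    integral_sub_right_eq_self (fun x => x * Real.exp (-((1/2) * s⁻¹) * x ^ 2)) m,
    integral_const_mul,
    integral_sub_right_eq_self (fun x => Real.exp (-((1/2) * s⁻¹) * x ^ 2)) m,
    integral_mul_exp_neg_mul_sq (half_inv_pos hs), integral_exp_base hs]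
  have h2 : Real.sqrt (2 * π * s) ≠ 0 := (sqrt_two_pi_s_pos hs).ne'
  field_simp
  ring

lemma integral_add3 {f g h : ℝ → ℝ} (hf : Integrable f) (hg : Integrable g)
    (hh : Integrable h) :
    ∫ x : ℝ, (f x + g x + h x) = (∫ x : ℝ, f x) + (∫ x : ℝ, g x) + ∫ x : ℝ, h x := by
  have h1 : Integrable (fun x => f x + g x) := hf.add hg
  rw [integral_add h1 hh, integral_add hf hg]

lemma integrable_sq_mul_g1d (hs : 0 < s) : Integrable (fun x => x ^ 2 * g1d m s x) := by
  rw [g1d_eq]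
  have : (fun x : ℝ => x ^ 2 * ((Real.sqrt (2 * π * s))⁻¹ * Real.exp (-((1/2) * s⁻¹) * (x - m) ^ 2)))
      = fun x : ℝ => (Real.sqrt (2 * π * s))⁻¹ * ((((x - m) ^ 2 * Real.exp (-((1/2) * s⁻¹) * (x - m) ^ 2))
          + (2 * m) * ((x - m) * Real.exp (-((1/2) * s⁻¹) * (x - m) ^ 2)))
          + m ^ 2 * Real.exp (-((1/2) * s⁻¹) * (x - m) ^ 2)) := by
    funext x; ring
  rw [this]
  exact (((((integrable_sq_mul_exp_neg_mul_sq (half_inv_pos hs)).comp_sub_right m)).add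
    (((integrable_mul_exp_neg_mul_sq (half_inv_pos hs)).comp_sub_right m).const_mul (2*m))).add
    (((integrable_exp_neg_mul_sq (half_inv_pos hs)).comp_sub_right m).const_mul (m^2))).const_mul _

lemma integral_sq_mul_g1d (hs : 0 < s) : ∫ x : ℝ, x ^ 2 * g1d m s x = s + m ^ 2 := by
  rw [g1d_eq]
  have : (fun x : ℝ => x ^ 2 * ((Real.sqrt (2 * π * s))⁻¹ * Real.exp (-((1/2) * s⁻¹) * (x - m) ^ 2)))
      = fun x : ℝ => (Real.sqrt (2 * π * s))⁻¹ * ((((x - m) ^ 2 * Real.exp (-((1/2) * s⁻¹) * (x - m) ^ 2))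
          + (2 * m) * ((x - m) * Real.exp (-((1/2) * s⁻¹) * (x - m) ^ 2)))
          + m ^ 2 * Real.exp (-((1/2) * s⁻¹) * (x - m) ^ 2)) := by
    funext x; ring
  rw [this, integral_const_mul,
    integral_add3 (((integrable_sq_mul_exp_neg_mul_sq (half_inv_pos hs)).comp_sub_right m))
      ((((integrable_mul_exp_neg_mul_sq (half_inv_pos hs)).comp_sub_right m).const_mul (2*m)))
      (((integrable_exp_neg_mul_sq (half_inv_pos hs)).comp_sub_right m).const_mul (m^2)),
    integral_sub_right_eq_self (fun x => x ^ 2 * Real.exp (-((1/2) * s⁻¹) * x ^ 2)) m,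
    integral_const_mul,
    integral_sub_right_eq_self (fun x => x * Real.exp (-((1/2) * s⁻¹) * x ^ 2)) m,
    integral_const_mul,
    integral_sub_right_eq_self (fun x => Real.exp (-((1/2) * s⁻¹) * x ^ 2)) m,
    integral_mul_exp_neg_mul_sq (half_inv_pos hs), integral_exp_base hs,
    integral_sq_mul_exp_neg_mul_sq (half_inv_pos hs)]
  have h1 : Real.sqrt (π / ((1/2) * s⁻¹)) = Real.sqrt (2 * π * s) := by
    congr 1; field_simp
  rw [h1]
  have h2 : Real.sqrt (2 * π * s) ≠ 0 := (sqrt_two_pi_s_pos hs).ne'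
  field_simp
  ring

section multi

open Matrix

variable {n : ℕ}

lemma sqrt_pow_nat {a : ℝ} (ha : 0 ≤ a) (k : ℕ) :
    Real.sqrt (a ^ k) = (Real.sqrt a) ^ k := by
  induction k with
  | zero => simp
  | succ k ih => rw [pow_succ, pow_succ, Real.sqrt_mul (pow_nonneg ha k), ih]

lemma g1d_pos {m s x : ℝ} (hs : 0 < s) : 0 < g1d m s x := by
  unfold g1d
  positivity

lemma prod_g1d_pos {s : ℝ} (hs : 0 < s) (μ y : Fin n → ℝ) :
    0 < ∏ k, g1d (μ k) s (y k) :=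
  Finset.prod_pos fun k _ => g1d_pos hs

lemma integrable_prod_g1d {s : ℝ} (hs : 0 < s) (μ : Fin n → ℝ) :
    MeasureTheory.Integrable (fun y : Fin n → ℝ => ∏ k, g1d (μ k) s (y k)) :=
  MeasureTheory.Integrable.fintype_prod (f := fun k x => g1d (μ k) s x)
    (fun _ => integrable_g1d hs)

lemma integral_prod_g1d {s : ℝ} (hs : 0 < s) (μ : Fin n → ℝ) :
    ∫ y : Fin n → ℝ, ∏ k, g1d (μ k) s (y k) = 1 := by
  rw [MeasureTheory.integral_fintype_prod_volume_eq_prod (f := fun k x => g1d (μ k) s x)]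
  simp [integral_g1d hs]

lemma coord_mul_prod (F : Fin n → ℝ → ℝ) (i : Fin n) (v : Fin n → ℝ) (y : Fin n → ℝ) :
    v i * ∏ k, F k (y k) = ∏ k, (if k = i then v k * F k (y k) else F k (y k)) := by
  rw [← Finset.mul_prod_erase Finset.univ _ (Finset.mem_univ i),
    ← Finset.mul_prod_erase Finset.univ
      (fun k => if k = i then v k * F k (y k) else F k (y k)) (Finset.mem_univ i),
    if_pos rfl, ← mul_assoc]
  congr 1
  exact Finset.prod_congr rfl fun k hk => (if_neg (Finset.ne_of_mem_erase hk)).symm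

lemma coord_rw {s : ℝ} (μ : Fin n → ℝ) (i : Fin n) (y : Fin n → ℝ) :
    y i * ∏ k, g1d (μ k) s (y k)
      = ∏ k, (fun k x => if k = i then x * g1d (μ k) s x else g1d (μ k) s x) k (y k) := by
  rw [coord_mul_prod (fun k x => g1d (μ k) s x) i y y]

lemma integrable_coord_mul_prod_g1d {s : ℝ} (hs : 0 < s) (μ : Fin n → ℝ) (i : Fin n) :
    MeasureTheory.Integrable (fun y : Fin n → ℝ => y i * ∏ k, g1d (μ k) s (y k)) := by
  have h1 : (fun y : Fin n → ℝ => y i * ∏ k, g1d (μ k) s (y k))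
      = fun y : Fin n → ℝ =>
        ∏ k, (fun k x => if k = i then x * g1d (μ k) s x else g1d (μ k) s x) k (y k) := by
    funext y; exact coord_rw μ i y
  rw [h1]
  refine MeasureTheory.Integrable.fintype_prod
    (f := fun k x => if k = i then x * g1d (μ k) s x else g1d (μ k) s x) fun k => ?_
  by_cases h : k = i
  · simpa [h] using integrable_id_mul_g1d (m := μ k) hs
  · simpa [h] using integrable_g1d (m := μ k) (s := s) hs

lemma integral_coord_mul_prod_g1d {s : ℝ} (hs : 0 < s) (μ : Fin n → ℝ) (i : Fin n) :
    ∫ y : Fin n → ℝ, y i * ∏ k, g1d (μ k) s (y k) = μ i := by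
  have h1 : (fun y : Fin n → ℝ => y i * ∏ k, g1d (μ k) s (y k))
      = fun y : Fin n → ℝ =>
        ∏ k, (fun k x => if k = i then x * g1d (μ k) s x else g1d (μ k) s x) k (y k) := by
    funext y; exact coord_rw μ i y
  rw [h1, MeasureTheory.integral_fintype_prod_volume_eq_prod
    (f := fun k x => if k = i then x * g1d (μ k) s x else g1d (μ k) s x)]
  have h2 : ∀ k, (∫ x : ℝ, if k = i then x * g1d (μ k) s x else g1d (μ k) s x)
      = if k = i then μ k else 1 := by
    intro k
    by_cases h : k = i
    · simp only [if_pos h]; exact integral_id_mul_g1d hs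
    · simp only [if_neg h]; exact integral_g1d hs
  simp only [h2]
  simp [Finset.prod_ite_eq']

lemma sq_rw {s : ℝ} (μ : Fin n → ℝ) (i : Fin n) (y : Fin n → ℝ) :
    (y i * y i) * ∏ k, g1d (μ k) s (y k)
      = ∏ k, (fun k x => if k = i then x ^ 2 * g1d (μ k) s x else g1d (μ k) s x) k (y k) := by
  have := coord_mul_prod (fun k x => g1d (μ k) s x) i (fun k => y k * y k) y
  rw [this]
  refine Finset.prod_congr rfl fun k _ => ?_
  by_cases h : k = i <;> simp [h, sq]

lemma pair_rw {s : ℝ} (μ : Fin n → ℝ) {i j : Fin n} (hij : i ≠ j) (y : Fin n → ℝ) :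
    (y i * y j) * ∏ k, g1d (μ k) s (y k)
      = ∏ k, (fun k x => if k = i then x * g1d (μ k) s x
          else if k = j then x * g1d (μ k) s x else g1d (μ k) s x) k (y k) := by
  rw [mul_assoc, coord_mul_prod (fun k x => g1d (μ k) s x) j y y,
    coord_mul_prod (fun k x => if k = j then y k * g1d (μ k) s (y k)
      else g1d (μ k) s (y k)) i y y]
  refine Finset.prod_congr rfl fun k _ => ?_
  by_cases h : k = i
  · subst h; simp [hij]
  · by_cases h2 : k = j <;> simp [h, h2, Ne.symm hij]

lemma integrable_pair_mul_prod_g1d {s : ℝ} (hs : 0 < s) (μ : Fin n → ℝ) (i j : Fin n) :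
    MeasureTheory.Integrable (fun y : Fin n → ℝ => (y i * y j) * ∏ k, g1d (μ k) s (y k)) := by
  by_cases hij : i = j
  · subst hij
    have h1 : (fun y : Fin n → ℝ => (y i * y i) * ∏ k, g1d (μ k) s (y k))
        = fun y : Fin n → ℝ => ∏ k,
          (fun k x => if k = i then x ^ 2 * g1d (μ k) s x else g1d (μ k) s x) k (y k) := by
      funext y; exact sq_rw μ i y
    rw [h1]
    refine MeasureTheory.Integrable.fintype_prod
      (f := fun k x => if k = i then x ^ 2 * g1d (μ k) s x else g1d (μ k) s x) fun k => ?_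
    by_cases h : k = i
    · simpa [h] using integrable_sq_mul_g1d (m := μ k) hs
    · simpa [h] using integrable_g1d (m := μ k) (s := s) hs
  · have h1 : (fun y : Fin n → ℝ => (y i * y j) * ∏ k, g1d (μ k) s (y k))
        = fun y : Fin n → ℝ => ∏ k, (fun k x => if k = i then x * g1d (μ k) s x
            else if k = j then x * g1d (μ k) s x else g1d (μ k) s x) k (y k) := by
      funext y; exact pair_rw μ hij y
    rw [h1]
    refine MeasureTheory.Integrable.fintype_prod
      (f := fun k x => if k = i then x * g1d (μ k) s x
        else if k = j then x * g1d (μ k) s x else g1d (μ k) s x) fun k => ?_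
    by_cases h : k = i
    · simpa [h] using integrable_id_mul_g1d (m := μ k) hs
    · by_cases h2 : k = j
      · simpa [h, h2] using integrable_id_mul_g1d (m := μ k) hs
      · simpa [h, h2] using integrable_g1d (m := μ k) (s := s) hs

lemma integral_pair_mul_prod_g1d {s : ℝ} (hs : 0 < s) (μ : Fin n → ℝ) (i j : Fin n) :
    ∫ y : Fin n → ℝ, (y i * y j) * ∏ k, g1d (μ k) s (y k)
      = (if i = j then s else 0) + μ i * μ j := by
  by_cases hij : i = j
  · subst hij
    have h1 : (fun y : Fin n → ℝ => (y i * y i) * ∏ k, g1d (μ k) s (y k))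
        = fun y : Fin n → ℝ => ∏ k,
          (fun k x => if k = i then x ^ 2 * g1d (μ k) s x else g1d (μ k) s x) k (y k) := by
      funext y; exact sq_rw μ i y
    rw [h1, MeasureTheory.integral_fintype_prod_volume_eq_prod
      (f := fun k x => if k = i then x ^ 2 * g1d (μ k) s x else g1d (μ k) s x)]
    have h2 : ∀ k, (∫ x : ℝ, if k = i then x ^ 2 * g1d (μ k) s x else g1d (μ k) s x)
        = if k = i then s + μ k ^ 2 else 1 := by
      intro k
      by_cases h : k = i
      · simp only [if_pos h]; exact integral_sq_mul_g1d hs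
      · simp only [if_neg h]; exact integral_g1d hs
    simp only [h2]
    simp [Finset.prod_ite_eq']
    ring
  · have h1 : (fun y : Fin n → ℝ => (y i * y j) * ∏ k, g1d (μ k) s (y k))
        = fun y : Fin n → ℝ => ∏ k, (fun k x => if k = i then x * g1d (μ k) s x
            else if k = j then x * g1d (μ k) s x else g1d (μ k) s x) k (y k) := by
      funext y; exact pair_rw μ hij y
    rw [h1, MeasureTheory.integral_fintype_prod_volume_eq_prod
      (f := fun k x => if k = i then x * g1d (μ k) s x
        else if k = j then x * g1d (μ k) s x else g1d (μ k) s x)]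
    have h2 : ∀ k, (∫ x : ℝ, if k = i then x * g1d (μ k) s x
        else if k = j then x * g1d (μ k) s x else g1d (μ k) s x)
        = if k = i then μ k else if k = j then μ k else 1 := by
      intro k
      by_cases h : k = i
      · simp only [if_pos h]; exact integral_id_mul_g1d hs
      · by_cases h2 : k = j
        · simp only [if_neg h, if_pos h2]; exact integral_id_mul_g1d hs
        · simp only [if_neg h, if_neg h2]; exact integral_g1d hs
    simp only [h2]
    rw [← Finset.mul_prod_erase Finset.univ _ (Finset.mem_univ i), if_pos rfl]
    rw [← Finset.mul_prod_erase (Finset.univ.erase i) _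
      (Finset.mem_erase.mpr ⟨Ne.symm hij, Finset.mem_univ j⟩), if_neg (Ne.symm hij), if_pos rfl]
    rw [Finset.prod_eq_one, if_neg hij]
    · ring
    · intro k hk
      have hk2 := Finset.mem_erase.mp hk
      have hk3 := Finset.mem_erase.mp hk2.2
      rw [if_neg hk3.1, if_neg hk2.1]

lemma integral_quad {s : ℝ} (hs : 0 < s) (μ : Fin n → ℝ) (c : ℝ) (b : Fin n → ℝ)
    (A : Matrix (Fin n) (Fin n) ℝ) :
    ∫ y : Fin n → ℝ,
        (c + (∑ i, b i * y i) + ∑ i, ∑ j, A i j * (y i * y j)) * ∏ k, g1d (μ k) s (y k)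
      = c + (∑ i, b i * μ i) + (s * ∑ i, A i i + ∑ i, ∑ j, A i j * (μ i * μ j)) := by
  have hp := integrable_prod_g1d hs μ
  have h1 : ∀ i : Fin n, MeasureTheory.Integrable
      (fun y : Fin n → ℝ => b i * (y i * ∏ k, g1d (μ k) s (y k))) :=
    fun i => (integrable_coord_mul_prod_g1d hs μ i).const_mul _
  have h2 : ∀ i j : Fin n, MeasureTheory.Integrable
      (fun y : Fin n → ℝ => A i j * ((y i * y j) * ∏ k, g1d (μ k) s (y k))) :=
    fun i j => (integrable_pair_mul_prod_g1d hs μ i j).const_mul _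
  have hS1 : MeasureTheory.Integrable
      (fun y : Fin n → ℝ => ∑ i, b i * (y i * ∏ k, g1d (μ k) s (y k))) :=
    MeasureTheory.integrable_finset_sum _ (fun i _ => h1 i)
  have hS2 : MeasureTheory.Integrable
      (fun y : Fin n → ℝ => ∑ i, ∑ j, A i j * ((y i * y j) * ∏ k, g1d (μ k) s (y k))) :=
    MeasureTheory.integrable_finset_sum _
      (fun i _ => MeasureTheory.integrable_finset_sum _ (fun j _ => h2 i j))
  have hfun : (fun y : Fin n → ℝ =>
        (c + (∑ i, b i * y i) + ∑ i, ∑ j, A i j * (y i * y j)) * ∏ k, g1d (μ k) s (y k))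
      = fun y : Fin n → ℝ => (c * ∏ k, g1d (μ k) s (y k)
          + ∑ i, b i * (y i * ∏ k, g1d (μ k) s (y k)))
          + ∑ i, ∑ j, A i j * ((y i * y j) * ∏ k, g1d (μ k) s (y k)) := by
    funext y
    simp only [add_mul, Finset.sum_mul, mul_assoc]
  have Ia : MeasureTheory.Integrable (fun y : Fin n → ℝ =>
      c * ∏ k, g1d (μ k) s (y k) + ∑ i, b i * (y i * ∏ k, g1d (μ k) s (y k))) :=
    (hp.const_mul c).add hS1
  rw [hfun, MeasureTheory.integral_add Ia hS2,
    MeasureTheory.integral_add (hp.const_mul c) hS1,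
    MeasureTheory.integral_finset_sum _ (fun i (_ : i ∈ Finset.univ) => h1 i),
    MeasureTheory.integral_finset_sum _ (fun i (_ : i ∈ Finset.univ) =>
      MeasureTheory.integrable_finset_sum _ (fun j _ => h2 i j))]
  have e0 : ∫ y : Fin n → ℝ, c * ∏ k, g1d (μ k) s (y k) = c := by
    rw [MeasureTheory.integral_const_mul, integral_prod_g1d hs, mul_one]
  have e1 : ∀ i : Fin n, (∫ y : Fin n → ℝ, b i * (y i * ∏ k, g1d (μ k) s (y k))) = b i * μ i := by
    intro i
    rw [MeasureTheory.integral_const_mul, integral_coord_mul_prod_g1d hs]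
  have e2 : ∀ i : Fin n, (∫ y : Fin n → ℝ, ∑ j, A i j * ((y i * y j) * ∏ k, g1d (μ k) s (y k)))
      = ∑ j, A i j * ((if i = j then s else 0) + μ i * μ j) := by
    intro i
    rw [MeasureTheory.integral_finset_sum _ (fun j (_ : j ∈ Finset.univ) => h2 i j)]
    refine Finset.sum_congr rfl fun j _ => ?_
    rw [MeasureTheory.integral_const_mul, integral_pair_mul_prod_g1d hs]
  rw [e0]
  rw [Finset.sum_congr rfl (fun i _ => e1 i), Finset.sum_congr rfl (fun i _ => e2 i)]
  congr 1
  have : ∀ i : Fin n, (∑ j, A i j * ((if i = j then s else 0) + μ i * μ j))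
      = A i i * s + ∑ j, A i j * (μ i * μ j) := by
    intro i
    rw [show (fun j => A i j * ((if i = j then s else 0) + μ i * μ j))
        = fun j => A i j * (if i = j then s else 0) + A i j * (μ i * μ j) from
      funext fun j => by ring]
    rw [Finset.sum_add_distrib]
    congr 1
    simp [mul_ite, Finset.sum_ite_eq]
  rw [Finset.sum_congr rfl (fun i _ => this i), Finset.sum_add_distrib]
  congr 1
  rw [← Finset.sum_mul, mul_comm]


open Matrix in
lemma gaussianPDF_closed {s : ℝ} (hs : 0 < s) (μ y : Fin n → ℝ) :
    gaussianPDF μ (s • (1 : Matrix (Fin n) (Fin n) ℝ)) y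
      = ((Real.sqrt (2 * π * s)) ^ n)⁻¹
          * Real.exp (-(1/2) * (s⁻¹ * ∑ k, (y k - μ k) ^ 2)) := by
  have hinv : (s • (1 : Matrix (Fin n) (Fin n) ℝ))⁻¹ = s⁻¹ • 1 := by
    apply Matrix.inv_eq_right_inv
    rw [Matrix.smul_mul, Matrix.mul_smul, one_mul, smul_smul, mul_inv_cancel₀ hs.ne', one_smul]
  have hdet : (s • (1 : Matrix (Fin n) (Fin n) ℝ)).det = s ^ n := by
    simp [Matrix.det_smul]
  unfold gaussianPDF
  rw [hinv, hdet, Fintype.card_fin]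
  have hconst : Real.sqrt ((2 * π) ^ n * s ^ n) = (Real.sqrt (2 * π * s)) ^ n := by
    rw [← mul_pow, sqrt_pow_nat (by positivity)]
  rw [hconst]
  congr 1
  rw [Matrix.smul_mulVec, Matrix.one_mulVec, dotProduct_smul, smul_eq_mul]
  have : (y - μ) ⬝ᵥ (y - μ) = ∑ k, (y k - μ k) ^ 2 := by
    simp [dotProduct, Pi.sub_apply, pow_two]
  rw [this]

open Matrix in
lemma gaussianPDF_prod {s : ℝ} (hs : 0 < s) (μ y : Fin n → ℝ) :
    gaussianPDF μ (s • (1 : Matrix (Fin n) (Fin n) ℝ)) y = ∏ k, g1d (μ k) s (y k) := by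
  rw [gaussianPDF_closed hs]
  unfold g1d
  rw [Finset.prod_mul_distrib, Finset.prod_const, Finset.card_univ, Fintype.card_fin,
    ← Real.exp_sum, inv_pow]
  congr 1
  congr 1
  rw [Finset.mul_sum, Finset.mul_sum]
  exact Finset.sum_congr rfl fun k _ => by ring

lemma diag_double_sum (a : ℝ) (y : Fin n → ℝ) :
    (∑ i, ∑ j, (if i = j then a else 0) * (y i * y j)) = ∑ i, a * (y i * y i) := by
  refine Finset.sum_congr rfl fun i _ => ?_
  rw [Finset.sum_eq_single i]
  · rw [if_pos rfl]
  · intro j _ hj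
    rw [if_neg (Ne.symm hj), zero_mul]
  · intro h
    exact absurd (Finset.mem_univ i) h

open Matrix in
lemma klGaussian_value {s t : ℝ} (hs : 0 < s) (ht : 0 < t) (μ m : Fin n → ℝ) :
    klGaussian μ (s • (1 : Matrix (Fin n) (Fin n) ℝ)) m (t • 1)
      = (Real.log ((Real.sqrt (2 * π * s)) ^ n)⁻¹ - Real.log ((Real.sqrt (2 * π * t)) ^ n)⁻¹)
        + ((1/2) * t⁻¹ * (m ⬝ᵥ m) - (1/2) * s⁻¹ * (μ ⬝ᵥ μ))
        + (s⁻¹ * (μ ⬝ᵥ μ) - t⁻¹ * (m ⬝ᵥ μ))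
        + (s * (n * ((1/2) * t⁻¹ - (1/2) * s⁻¹)) + ((1/2) * t⁻¹ - (1/2) * s⁻¹) * (μ ⬝ᵥ μ)) := by
  set a : ℝ := (1/2) * t⁻¹ - (1/2) * s⁻¹ with ha
  set c' : ℝ := (Real.log ((Real.sqrt (2 * π * s)) ^ n)⁻¹
      - Real.log ((Real.sqrt (2 * π * t)) ^ n)⁻¹)
      + ∑ i, ((1/2) * t⁻¹ * (m i) ^ 2 - (1/2) * s⁻¹ * (μ i) ^ 2) with hc'
  have hCs : (0:ℝ) < (Real.sqrt (2 * π * s)) ^ n := pow_pos (sqrt_two_pi_s_pos hs) n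
  have hCt : (0:ℝ) < (Real.sqrt (2 * π * t)) ^ n := pow_pos (sqrt_two_pi_s_pos ht) n
  have hfun : (fun y : Fin n → ℝ =>
        Real.log (gaussianPDF μ (s • (1 : Matrix (Fin n) (Fin n) ℝ)) y
          / gaussianPDF m (t • 1) y) * gaussianPDF μ (s • 1) y)
      = fun y : Fin n → ℝ =>
        (c' + (∑ i, (s⁻¹ * μ i - t⁻¹ * m i) * y i)
          + ∑ i, ∑ j, (Matrix.of fun i j : Fin n => if i = j then a else 0) i j * (y i * y j))
          * ∏ k, g1d (μ k) s (y k) := by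
    have hlog : ∀ y : Fin n → ℝ,
        Real.log (gaussianPDF μ (s • (1 : Matrix (Fin n) (Fin n) ℝ)) y
          / gaussianPDF m (t • 1) y)
        = c' + (∑ i, (s⁻¹ * μ i - t⁻¹ * m i) * y i)
          + ∑ i, ∑ j, (Matrix.of fun i j : Fin n => if i = j then a else 0) i j * (y i * y j) := by
      intro y
      rw [show ((Matrix.of fun i j : Fin n => if i = j then a else 0) : Matrix (Fin n) (Fin n) ℝ)
          = fun i j : Fin n => if i = j then a else 0 from rfl]
      rw [gaussianPDF_closed hs, gaussianPDF_closed ht]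
      rw [Real.log_div (by positivity) (by positivity), Real.log_mul (by positivity)
        (Real.exp_ne_zero _), Real.log_mul (by positivity) (Real.exp_ne_zero _),
        Real.log_exp, Real.log_exp]
      have key : -(1/2) * (s⁻¹ * ∑ k, (y k - μ k) ^ 2) + (1/2) * (t⁻¹ * ∑ k, (y k - m k) ^ 2)
          = (∑ i, ((1/2) * t⁻¹ * (m i) ^ 2 - (1/2) * s⁻¹ * (μ i) ^ 2))
            + ((∑ i, (s⁻¹ * μ i - t⁻¹ * m i) * y i) + ∑ i, a * (y i * y i)) := by
        simp only [Finset.mul_sum, neg_mul, ← Finset.sum_neg_distrib, ← Finset.sum_add_distrib]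
        refine Finset.sum_congr rfl fun i _ => ?_
        rw [ha]
        ring
      rw [show (∑ i, ∑ j, (fun i j : Fin n => if i = j then a else 0) i j * (y i * y j))
          = ∑ i, a * (y i * y i) from diag_double_sum a y]
      rw [hc']
      linarith [key]
    funext y
    rw [hlog y, gaussianPDF_prod hs]
  unfold klGaussian
  rw [hfun, integral_quad hs μ c' (fun i => s⁻¹ * μ i - t⁻¹ * m i)
    (Matrix.of fun i j : Fin n => if i = j then a else 0)]
  have hdiag : (∑ i, (Matrix.of fun i j : Fin n => if i = j then a else 0) i i) = n * a := by
    simp [Matrix.of_apply]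
  have hoff : (∑ i, ∑ j, (Matrix.of fun i j : Fin n => if i = j then a else 0) i j * (μ i * μ j))
      = a * (μ ⬝ᵥ μ) := by
    rw [show (∑ i, ∑ j, ((Matrix.of fun i j : Fin n => if i = j then a else 0) i j * (μ i * μ j)))
        = ∑ i, a * (μ i * μ i) from diag_double_sum a μ]
    rw [dotProduct, Finset.mul_sum]
  rw [hdiag, hoff, hc']
  have e1 : (∑ i, ((1/2) * t⁻¹ * (m i) ^ 2 - (1/2) * s⁻¹ * (μ i) ^ 2))
      = (1/2) * t⁻¹ * (m ⬝ᵥ m) - (1/2) * s⁻¹ * (μ ⬝ᵥ μ) := by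
    rw [dotProduct, dotProduct, Finset.mul_sum, Finset.mul_sum,
      ← Finset.sum_sub_distrib]
    exact Finset.sum_congr rfl fun i _ => by ring
  have e2 : (∑ i, (s⁻¹ * μ i - t⁻¹ * m i) * μ i) = s⁻¹ * (μ ⬝ᵥ μ) - t⁻¹ * (m ⬝ᵥ μ) := by
    rw [dotProduct, dotProduct, Finset.mul_sum, Finset.mul_sum,
      ← Finset.sum_sub_distrib]
    exact Finset.sum_congr rfl fun i _ => by ring
  rw [e1, e2]

open Matrix in
lemma proj_isUnit {p : ℕ} (X : Matrix (Fin n) (Fin p) ℝ) (hX : X.rank = p) :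
    IsUnit (Xᵀ * X).det := by
  have h1 : (Xᵀ * X).rank = p := by rw [Matrix.rank_transpose_mul_self, hX]
  have h2 : LinearMap.range (Xᵀ * X).mulVecLin = ⊤ := by
    apply Submodule.eq_top_of_finrank_eq
    rw [show Module.finrank ℝ (LinearMap.range (Xᵀ * X).mulVecLin) = (Xᵀ * X).rank from rfl, h1,
      Module.finrank_fintype_fun_eq_card, Fintype.card_fin]
  have h3 : Function.Surjective ((Xᵀ * X).mulVec) := by
    have := LinearMap.range_eq_top.mp h2
    intro v
    obtain ⟨w, hw⟩ := this v
    exact ⟨w, hw⟩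
  exact (Matrix.isUnit_iff_isUnit_det _).mp (Matrix.mulVec_surjective_iff_isUnit.mp h3)

open Matrix in
lemma proj_trace {p : ℕ} (X : Matrix (Fin n) (Fin p) ℝ) (hX : X.rank = p) :
    (X * (Xᵀ * X)⁻¹ * Xᵀ).trace = p := by
  rw [Matrix.trace_mul_comm (X * (Xᵀ * X)⁻¹) Xᵀ, ← Matrix.mul_assoc,
    Matrix.mul_assoc Xᵀ X, ← Matrix.mul_assoc Xᵀ X]
  rw [show Xᵀ * X * (Xᵀ * X)⁻¹ = 1 from Matrix.mul_nonsing_inv _ (proj_isUnit X hX)]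
  simp [Matrix.trace_one]

open Matrix in
lemma proj_symm {p : ℕ} (X : Matrix (Fin n) (Fin p) ℝ) :
    (X * (Xᵀ * X)⁻¹ * Xᵀ)ᵀ = X * (Xᵀ * X)⁻¹ * Xᵀ := by
  rw [Matrix.transpose_mul, Matrix.transpose_mul, Matrix.transpose_transpose,
    Matrix.transpose_nonsing_inv, Matrix.transpose_mul, Matrix.transpose_transpose,
    Matrix.mul_assoc]

open Matrix in
lemma proj_idem {p : ℕ} (X : Matrix (Fin n) (Fin p) ℝ) (hX : X.rank = p) :
    (X * (Xᵀ * X)⁻¹ * Xᵀ) * (X * (Xᵀ * X)⁻¹ * Xᵀ) = X * (Xᵀ * X)⁻¹ * Xᵀ := by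
  have h : (Xᵀ * X)⁻¹ * (Xᵀ * X) = 1 := Matrix.nonsing_inv_mul _ (proj_isUnit X hX)
  calc (X * (Xᵀ * X)⁻¹ * Xᵀ) * (X * (Xᵀ * X)⁻¹ * Xᵀ)
      = X * (((Xᵀ * X)⁻¹ * (Xᵀ * X)) * ((Xᵀ * X)⁻¹ * Xᵀ)) := by
        simp only [Matrix.mul_assoc]
    _ = X * (Xᵀ * X)⁻¹ * Xᵀ := by rw [h, Matrix.one_mul, Matrix.mul_assoc]

open Matrix in
lemma proj_dot {p : ℕ} (X : Matrix (Fin n) (Fin p) ℝ) (hX : X.rank = p) (μ : Fin n → ℝ) :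
    ((X * (Xᵀ * X)⁻¹ * Xᵀ) *ᵥ μ) ⬝ᵥ ((X * (Xᵀ * X)⁻¹ * Xᵀ) *ᵥ μ)
      = μ ⬝ᵥ ((X * (Xᵀ * X)⁻¹ * Xᵀ) *ᵥ μ) := by
  set P := X * (Xᵀ * X)⁻¹ * Xᵀ with hP
  have h1 : (P *ᵥ μ) ⬝ᵥ (P *ᵥ μ) = ((P *ᵥ μ) ᵥ* P) ⬝ᵥ μ := dotProduct_mulVec _ _ _
  have h2 : (P *ᵥ μ) ᵥ* P = P *ᵥ (P *ᵥ μ) := by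
    rw [← Matrix.mulVec_transpose, hP, proj_symm]
  rw [h1, h2, Matrix.mulVec_mulVec, proj_idem X hX, dotProduct_comm]

open Matrix in
lemma dot_expand (M : Matrix (Fin n) (Fin n) ℝ) (r : ℝ) (v w : Fin n → ℝ) :
    r * (v ⬝ᵥ (M *ᵥ w)) = ∑ i, ∑ j, (r * M i j) * (v i * w j) := by
  simp only [dotProduct, Matrix.mulVec, Finset.mul_sum]
  exact Finset.sum_congr rfl fun i _ => Finset.sum_congr rfl fun j _ => by ring

end multi
/-- Expected log Bayes factor for two Gaussian linear regression models with equal known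
variance σ², under the data-generating process y ~ N(μ*, σ*²Iₙ):
E(log B₁₂(y)) = (KL₂ − KL₁)/(2 − κ) + ((p₁ − p₂)/2)(log(1 − κ) + κσ*²/σ²),
where KLᵢ = KL(N(μ*, σ*²Iₙ) ‖ N(Hᵢμ*, σ²Iₙ)). -/
theorem mean_log_bayes_factor {n p₁ p₂ : ℕ} (X₁ : Matrix (Fin n) (Fin p₁) ℝ)
    (X₂ : Matrix (Fin n) (Fin p₂) ℝ) (hX₁ : X₁.rank = p₁) (hX₂ : X₂.rank = p₂)
    (κ : ℝ) (hκ : κ ∈ Set.Ioo (0 : ℝ) 1) (σ σstar : ℝ) (hσ : 0 < σ) (hσstar : 0 < σstar)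
    (μstar : Fin n → ℝ) (P₁ P₂ H₁ H₂ : Matrix (Fin n) (Fin n) ℝ)
    (hP₁ : P₁ = X₁ * (X₁ᵀ * X₁)⁻¹ * X₁ᵀ) (hP₂ : P₂ = X₂ * (X₂ᵀ * X₂)⁻¹ * X₂ᵀ)
    (hH₁ : H₁ = κ • P₁) (hH₂ : H₂ = κ • P₂)
    (logB : (Fin n → ℝ) → ℝ)
    (hlogB : ∀ y, logB y = ((p₁ : ℝ) - p₂) / 2 * Real.log (1 - κ)
        + (1 / (2 * σ ^ 2)) * (y ⬝ᵥ ((H₁ - H₂) *ᵥ y))) :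
    gExp μstar (σstar ^ 2 • 1) logB
    = (klGaussian μstar (σstar ^ 2 • 1) (H₂ *ᵥ μstar) (σ ^ 2 • 1)
        - klGaussian μstar (σstar ^ 2 • 1) (H₁ *ᵥ μstar) (σ ^ 2 • 1)) / (2 - κ)
      + ((p₁ : ℝ) - p₂) / 2 * (Real.log (1 - κ) + κ * σstar ^ 2 / σ ^ 2) := by
  obtain ⟨hκ0, hκ1⟩ := hκ
  have hs : (0:ℝ) < σstar ^ 2 := by positivity
  have ht : (0:ℝ) < σ ^ 2 := by positivity
  set Q₁ : ℝ := μstar ⬝ᵥ (P₁ *ᵥ μstar) with hQ₁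
  set Q₂ : ℝ := μstar ⬝ᵥ (P₂ *ᵥ μstar) with hQ₂
  have htr : (H₁ - H₂).trace = κ * p₁ - κ * p₂ := by
    rw [Matrix.trace_sub, hH₁, hH₂, Matrix.trace_smul, Matrix.trace_smul, hP₁, hP₂,
      proj_trace X₁ hX₁, proj_trace X₂ hX₂, smul_eq_mul, smul_eq_mul]
  have hdot : μstar ⬝ᵥ ((H₁ - H₂) *ᵥ μstar) = κ * Q₁ - κ * Q₂ := by
    rw [Matrix.sub_mulVec, dotProduct_sub, hH₁, hH₂, Matrix.smul_mulVec,
      Matrix.smul_mulVec, dotProduct_smul, dotProduct_smul,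
      smul_eq_mul, smul_eq_mul, hQ₁, hQ₂]
  -- gExp side
  have hgexp : gExp μstar (σstar ^ 2 • 1) logB
      = ((p₁ : ℝ) - p₂) / 2 * Real.log (1 - κ)
        + (σstar ^ 2 * ((1/(2*σ^2)) * ((H₁ - H₂).trace))
          + (1/(2*σ^2)) * (μstar ⬝ᵥ ((H₁ - H₂) *ᵥ μstar))) := by
    unfold gExp
    have hfun : (fun y : Fin n → ℝ => logB y * gaussianPDF μstar (σstar ^ 2 • 1) y)
        = fun y : Fin n → ℝ =>
          (((p₁ : ℝ) - p₂) / 2 * Real.log (1 - κ) + (∑ i, (0:ℝ) * y i)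
            + ∑ i, ∑ j, (Matrix.of fun i j : Fin n =>
                (1/(2*σ^2)) * (H₁ - H₂) i j) i j * (y i * y j))
            * ∏ k, g1d (μstar k) (σstar ^ 2) (y k) := by
      funext y
      rw [hlogB y, gaussianPDF_prod hs]
      congr 1
      rw [show ((Matrix.of fun i j : Fin n => (1/(2*σ^2)) * (H₁ - H₂) i j)
          : Matrix (Fin n) (Fin n) ℝ) = fun i j : Fin n => (1/(2*σ^2)) * (H₁ - H₂) i j from rfl,
        ← dot_expand (H₁ - H₂) (1/(2*σ^2)) y y]
      simp
    rw [hfun, integral_quad hs μstar _ (fun _ => (0:ℝ))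
      (Matrix.of fun i j : Fin n => (1/(2*σ^2)) * (H₁ - H₂) i j)]
    rw [show ((Matrix.of fun i j : Fin n => (1/(2*σ^2)) * (H₁ - H₂) i j)
        : Matrix (Fin n) (Fin n) ℝ) = fun i j : Fin n => (1/(2*σ^2)) * (H₁ - H₂) i j from rfl]
    have hz : (∑ i : Fin n, (0:ℝ) * μstar i) = 0 := by simp
    have hd : (∑ i : Fin n, (1/(2*σ^2)) * (H₁ - H₂) i i) = (1/(2*σ^2)) * (H₁ - H₂).trace := by
      rw [Matrix.trace, Finset.mul_sum]
      rfl
    have ho : (∑ i, ∑ j, ((1/(2*σ^2)) * (H₁ - H₂) i j) * (μstar i * μstar j))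
        = (1/(2*σ^2)) * (μstar ⬝ᵥ ((H₁ - H₂) *ᵥ μstar)) := by
      rw [dot_expand]
    rw [hz, hd, ho, add_zero]
  -- dot product identities
  have hm1 : (H₁ *ᵥ μstar) ⬝ᵥ (H₁ *ᵥ μstar) = κ^2 * Q₁ := by
    rw [hH₁, Matrix.smul_mulVec, smul_dotProduct, dotProduct_smul,
      smul_eq_mul, smul_eq_mul, hP₁, proj_dot X₁ hX₁ μstar, ← hP₁, ← hQ₁]
    ring
  have hm2 : (H₂ *ᵥ μstar) ⬝ᵥ (H₂ *ᵥ μstar) = κ^2 * Q₂ := by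
    rw [hH₂, Matrix.smul_mulVec, smul_dotProduct, dotProduct_smul,
      smul_eq_mul, smul_eq_mul, hP₂, proj_dot X₂ hX₂ μstar, ← hP₂, ← hQ₂]
    ring
  have hm1μ : (H₁ *ᵥ μstar) ⬝ᵥ μstar = κ * Q₁ := by
    rw [hH₁, Matrix.smul_mulVec, smul_dotProduct, smul_eq_mul,
      dotProduct_comm, hQ₁]
  have hm2μ : (H₂ *ᵥ μstar) ⬝ᵥ μstar = κ * Q₂ := by
    rw [hH₂, Matrix.smul_mulVec, smul_dotProduct, smul_eq_mul,
      dotProduct_comm, hQ₂]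
  rw [hgexp, htr, hdot,
    klGaussian_value hs ht μstar (H₂ *ᵥ μstar), klGaussian_value hs ht μstar (H₁ *ᵥ μstar),
    hm1, hm2, hm1μ, hm2μ]
  have h2κ : (2:ℝ) - κ ≠ 0 := by linarith
  have hσ2 : (σ:ℝ)^2 ≠ 0 := ht.ne'
  have hσs2 : (σstar:ℝ)^2 ≠ 0 := hs.ne'
  field_simp
  ring
end
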